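/- arXiv:1009.2258 — 3 statements merged into one kernel-verified Lean document; each statement's English description precedes it below -/
import Mathlib

section
/- Let (V, Ω) be a real symplectic vector space of dimension 2g, let W be an n-dimensional real vector space (n ≥ 1), and let E ⊆ Hom_ℝ(W, V) be a linear subspace of codimension q ≥ 1. If g ≥ 2nq, then there exists a 2n-dimensional linear subspace P ⊆ V such that the restriction of Ω to P is nondegenerate (P is a symplectic subspace) and every linear map f : W → V whose image is contained in P belongs to E. -/
open Module Submodule

lemma aux_ker (V : Type*) [AddCommGroup V] [Module ℝ V] [FiniteDimensional ℝ V]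
    (S : Submodule ℝ V) (f : V →ₗ[ℝ] ℝ) :
    finrank ℝ S ≤ finrank ℝ (S ⊓ LinearMap.ker f : Submodule ℝ V) + 1 := by
  have h1 : finrank ℝ (LinearMap.range (f ∘ₗ S.subtype)) + finrank ℝ (LinearMap.ker (f ∘ₗ S.subtype)) = finrank ℝ S :=
    LinearMap.finrank_range_add_finrank_ker _
  have h2 : finrank ℝ (LinearMap.range (f ∘ₗ S.subtype)) ≤ 1 := by
    simpa using Submodule.finrank_le (LinearMap.range (f ∘ₗ S.subtype))
  have h3 : (LinearMap.ker (f ∘ₗ S.subtype)).map S.subtype = S ⊓ LinearMap.ker f := by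
    rw [LinearMap.ker_comp, Submodule.map_comap_subtype]
  have h4 : finrank ℝ (S ⊓ LinearMap.ker f : Submodule ℝ V) = finrank ℝ (LinearMap.ker (f ∘ₗ S.subtype)) := by
    rw [← h3, Submodule.finrank_map_subtype_eq]
  omega

/-- Inside a subspace on which an alternating form is nondegenerate, one can find
a symplectic subspace of any even dimension up to the dimension of the subspace. -/
lemma aux_symp (V : Type*) [AddCommGroup V] [Module ℝ V] [FiniteDimensional ℝ V]
    (Ω : V →ₗ[ℝ] V →ₗ[ℝ] ℝ) (hΩalt : Ω.IsAlt) :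
    ∀ (m : ℕ) (S : Submodule ℝ V),
      (∀ x ∈ S, (∀ y ∈ S, Ω x y = 0) → x = 0) → 2 * m ≤ finrank ℝ S →
      ∃ P : Submodule ℝ V, P ≤ S ∧ finrank ℝ P = 2 * m ∧
        (∀ x ∈ P, (∀ y ∈ P, Ω x y = 0) → x = 0) := by
  intro m
  induction m with
  | zero =>
    intro S _ _
    exact ⟨⊥, bot_le, by simp, by simp⟩
  | succ m ih =>
    intro S hnd hdim
    -- S is nontrivial
    have hSne : ∃ u : V, u ∈ S ∧ u ≠ 0 := by
      by_contra h
      push_neg at h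
      have : S = ⊥ := by
        ext x; simp only [Submodule.mem_bot]
        exact ⟨fun hx => by by_contra hne; exact hne (h x hx ▸ rfl) , fun hx => hx ▸ S.zero_mem⟩
      rw [this] at hdim
      simp only [finrank_bot] at hdim
      omega
    obtain ⟨u, huS, hu0⟩ := hSne
    obtain ⟨v₀, hv₀S, hv₀⟩ : ∃ y ∈ S, Ω u y ≠ 0 := by
      by_contra h
      push_neg at h
      exact hu0 (hnd u huS h)
    set v : V := (Ω u v₀)⁻¹ • v₀ with hv
    have hvS : v ∈ S := S.smul_mem _ hv₀S
    have huv : Ω u v = 1 := by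
      rw [hv, map_smul, smul_eq_mul, inv_mul_cancel₀ hv₀]
    have hvu : Ω v u = -1 := by
      rw [← hΩalt.neg, huv]
    -- the symplectic plane
    set P₂ : Submodule ℝ V := span ℝ {u, v} with hP₂
    have hP₂S : P₂ ≤ S := by
      rw [hP₂, span_le]
      rintro x (rfl | rfl)
      exacts [huS, hvS]
    -- membership decomposition in P₂
    have hmemP₂ : ∀ x ∈ P₂, ∃ a b : ℝ, x = a • u + b • v := by
      intro x hx
      rw [hP₂] at hx
      have : ({u, v} : Set V) = insert u {v} := rfl
      rw [this, span_insert, Submodule.mem_sup] at hx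
      obtain ⟨y, hy, z, hz, rfl⟩ := hx
      rw [mem_span_singleton] at hy hz
      obtain ⟨a, rfl⟩ := hy
      obtain ⟨b, rfl⟩ := hz
      exact ⟨a, b, rfl⟩
    have hP₂nd : ∀ x ∈ P₂, (∀ y ∈ P₂, Ω x y = 0) → x = 0 := by
      intro x hx h
      obtain ⟨a, b, rfl⟩ := hmemP₂ x hx
      have hu' : u ∈ P₂ := subset_span (by simp)
      have hv' : v ∈ P₂ := subset_span (by simp)
      have h1 := h v hv'
      have h2 := h u hu'
      simp only [map_add, map_smul, LinearMap.add_apply, LinearMap.smul_apply,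
        hΩalt.self_eq_zero, huv, hvu, smul_eq_mul] at h1 h2
      have ha : a = 0 := by linarith [h1]
      have hb : b = 0 := by linarith [h2]
      simp [ha, hb]
    have hP₂rank : finrank ℝ P₂ = 2 := by
      have hli : LinearIndependent ℝ ![u, v] := by
        rw [LinearIndependent.pair_iff]
        intro s t hst
        have h1 : Ω (s • u + t • v) v = 0 := by rw [hst]; simp
        have h2 : Ω (s • u + t • v) u = 0 := by rw [hst]; simp
        simp only [map_add, map_smul, LinearMap.add_apply, LinearMap.smul_apply,
          hΩalt.self_eq_zero, huv, hvu, smul_eq_mul] at h1 h2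
        constructor <;> linarith
      have := finrank_span_eq_card hli
      have hr : Set.range ![u, v] = {u, v} := by
        ext x; simp [Fin.exists_fin_two, or_comm]
      rw [hP₂, ← hr]
      simpa using this
    -- the orthogonal complement of P₂ within S
    set S' : Submodule ℝ V := (S ⊓ LinearMap.ker (Ω u)) ⊓ LinearMap.ker (Ω v) with hS'
    have hS'S : S' ≤ S := le_trans inf_le_left inf_le_left
    have hS'mem : ∀ x, x ∈ S' ↔ x ∈ S ∧ Ω u x = 0 ∧ Ω v x = 0 := by
      intro x
      simp [hS', LinearMap.mem_ker, and_assoc]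
    have hS'dim : 2 * m ≤ finrank ℝ S' := by
      have a1 := aux_ker V S (Ω u)
      have a2 := aux_ker V (S ⊓ LinearMap.ker (Ω u)) (Ω v)
      rw [← hS'] at a2
      omega
    have hS'nd : ∀ x ∈ S', (∀ y ∈ S', Ω x y = 0) → x = 0 := by
      intro x hx h
      obtain ⟨hxS, hxu, hxv⟩ := (hS'mem x).1 hx
      refine hnd x hxS ?_
      intro y hyS
      set y' : V := y - (Ω u y) • v + (Ω v y) • u with hy'
      have hy'S' : y' ∈ S' := by
        rw [hS'mem]
        refine ⟨by
          exact S.add_mem (S.sub_mem hyS (S.smul_mem _ hvS)) (S.smul_mem _ huS), ?_, ?_⟩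
        · simp [hy', huv, hΩalt.self_eq_zero]
        · simp [hy', hvu, hΩalt.self_eq_zero]
      have hxu' : Ω x u = 0 := by rw [← hΩalt.neg, hxu]; ring
      have hxv' : Ω x v = 0 := by rw [← hΩalt.neg, hxv]; ring
      have := h y' hy'S'
      have hexp : Ω x y' = Ω x y - (Ω u y) * (Ω x v) + (Ω v y) * (Ω x u) := by
        simp [hy', mul_comm]
      rw [this] at hexp
      rw [hxu', hxv'] at hexp
      linarith
    obtain ⟨P', hP'S', hP'rank, hP'nd⟩ := ih S' hS'nd hS'dim
    -- assemble
    refine ⟨P₂ ⊔ P', sup_le hP₂S (le_trans hP'S' hS'S), ?_, ?_⟩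
    · have hinf : P₂ ⊓ P' = ⊥ := by
        rw [eq_bot_iff]
        intro x ⟨hx2, hx'⟩
        obtain ⟨a, b, rfl⟩ := hmemP₂ x hx2
        obtain ⟨_, hxu, hxv⟩ := (hS'mem _).1 (hP'S' hx')
        simp only [map_add, map_smul, LinearMap.add_apply, LinearMap.smul_apply,
          hΩalt.self_eq_zero, huv, hvu, smul_eq_mul] at hxu hxv
        have ha : a = 0 := by linarith
        have hb : b = 0 := by linarith
        simp [ha, hb]
      have := Submodule.finrank_sup_add_finrank_inf_eq P₂ P'
      rw [hinf] at this
      simp only [finrank_bot] at this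
      omega
    · intro x hx h
      rw [Submodule.mem_sup] at hx
      obtain ⟨p, hp, p', hp', rfl⟩ := hx
      -- p' is orthogonal to everything in P₂
      have hp'orth : ∀ y ∈ P₂, Ω p' y = 0 := by
        intro y hy
        obtain ⟨a, b, rfl⟩ := hmemP₂ y hy
        obtain ⟨_, hxu, hxv⟩ := (hS'mem _).1 (hP'S' hp')
        have h1 : Ω p' u = 0 := by rw [← hΩalt.neg, hxu]; ring
        have h2 : Ω p' v = 0 := by rw [← hΩalt.neg, hxv]; ring
        simp [h1, h2]
      have hp0 : p = 0 := by
        refine hP₂nd p hp ?_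
        intro y hy
        have := h y (le_sup_left (a := P₂) (b := P') hy)
        have h2 := hp'orth y hy
        simp only [map_add, LinearMap.add_apply] at this
        linarith
      have hp'0 : p' = 0 := by
        refine hP'nd p' hp' ?_
        intro y hy
        have := h y (le_sup_right (a := P₂) (b := P') hy)
        rw [hp0] at this
        simpa using this
      rw [hp0, hp'0, add_zero]


section Main

/-- existence of a symplectic `2n`-plane `P` with `Hom(W,P) ⊆ E`. -/
theorem stmt1 (g n q : ℕ) (hn : 1 ≤ n) (hq : 1 ≤ q)
    (V : Type*) [AddCommGroup V] [Module ℝ V] [FiniteDimensional ℝ V]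
    (Ω : V →ₗ[ℝ] V →ₗ[ℝ] ℝ) (hΩalt : Ω.IsAlt) (hΩnd : Ω.Nondegenerate)
    (hV : Module.finrank ℝ V = 2 * g)
    (W : Type*) [AddCommGroup W] [Module ℝ W] [FiniteDimensional ℝ W]
    (hW : Module.finrank ℝ W = n)
    (E : Submodule ℝ (W →ₗ[ℝ] V))
    (hE : Module.finrank ℝ ((W →ₗ[ℝ] V) ⧸ E) = q)
    (hg : 2 * n * q ≤ g) :
    ∃ P : Submodule ℝ V,
      Module.finrank ℝ P = 2 * n ∧
      (∀ x ∈ P, (∀ y ∈ P, Ω x y = 0) → x = 0) ∧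
      (∀ f : W →ₗ[ℝ] V, LinearMap.range f ≤ P → f ∈ E) := by
  classical
  set b : Basis (Fin (finrank ℝ W)) ℝ W := Module.finBasis ℝ W with hb
  let T : Fin (finrank ℝ W) → (V →ₗ[ℝ] (W →ₗ[ℝ] V)) := fun j =>
    { toFun := fun v => (b.coord j).smulRight v
      map_add' := by intro x y; ext w; simp
      map_smul' := by
        intro c x; ext w
        simp only [LinearMap.smulRight_apply, LinearMap.smul_apply, RingHom.id_apply]
        exact smul_comm _ _ _ }
  have hT : ∀ (f : W →ₗ[ℝ] V), ∑ j, T j (f (b j)) = f := by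
    intro f
    ext w
    conv_rhs => rw [← b.sum_repr w]
    rw [map_sum, LinearMap.sum_apply]
    refine Finset.sum_congr rfl fun j _ => ?_
    show (b.coord j) w • f (b j) = f (b.repr w j • b j)
    rw [Basis.coord_apply, map_smul]
  set π := E.mkQ with hπ
  set K : Submodule ℝ V := Finset.univ.inf (fun j => LinearMap.ker (π ∘ₗ T j)) with hK
  have hKE : ∀ f : W →ₗ[ℝ] V, LinearMap.range f ≤ K → f ∈ E := by
    intro f hf
    have hπf : π f = 0 := by
      rw [← hT f, map_sum]
      refine Finset.sum_eq_zero fun j _ => ?_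
      have h1 : f (b j) ∈ K := hf (LinearMap.mem_range_self f (b j))
      have h2 := (Submodule.mem_finsetInf.1 h1) j (Finset.mem_univ j)
      simpa [LinearMap.mem_ker] using h2
    rwa [hπ, Submodule.mkQ_apply, Submodule.Quotient.mk_eq_zero] at hπf
  have hKdim : 2 * g ≤ finrank ℝ K + n * q := by
    have key : ∀ s : Finset (Fin (finrank ℝ W)),
        2 * g ≤ finrank ℝ (s.inf (fun j => LinearMap.ker (π ∘ₗ T j)) : Submodule ℝ V) + s.card * q := by
      intro s
      induction s using Finset.induction_on with
      | empty =>
        simp only [Finset.inf_empty, Finset.card_empty, zero_mul, add_zero]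
        rw [Finset.inf_empty, finrank_top, hV]
      | @insert a s ha ih =>
        rw [Finset.inf_insert, Finset.card_insert_of_notMem ha]
        set A := LinearMap.ker (π ∘ₗ T a)
        set B : Submodule ℝ V := s.inf (fun j => LinearMap.ker (π ∘ₗ T j))
        have h1 : finrank ℝ (A ⊔ B : Submodule ℝ V) + finrank ℝ (A ⊓ B : Submodule ℝ V)
            = finrank ℝ A + finrank ℝ B := Submodule.finrank_sup_add_finrank_inf_eq A B
        have h2 : finrank ℝ (A ⊔ B : Submodule ℝ V) ≤ 2 * g := hV ▸ Submodule.finrank_le _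
        have h3 : finrank ℝ (LinearMap.range (π ∘ₗ T a)) + finrank ℝ A = 2 * g := by
          rw [← hV]; exact LinearMap.finrank_range_add_finrank_ker _
        have h4 : finrank ℝ (LinearMap.range (π ∘ₗ T a)) ≤ q := by
          rw [← hE]; exact Submodule.finrank_le _
        have h5 : (s.card + 1) * q = s.card * q + q := by ring
        omega
    have := key Finset.univ
    rw [Finset.card_univ, Fintype.card_fin] at this
    have hKeq : finrank ℝ K
        = finrank ℝ (Finset.univ.inf (fun j => LinearMap.ker (π ∘ₗ T j)) : Submodule ℝ V) := rfl
    have h2 : (finrank ℝ W) * q = n * q := by rw [hW]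
    omega
  -- the orthogonal of K and the radical
  set Φ : V →ₗ[ℝ] Module.Dual ℝ K := K.subtype.dualMap ∘ₗ Ω with hΦ
  have hΩinj : Function.Injective (Ω : V →ₗ[ℝ] Module.Dual ℝ V) := by
    rw [← LinearMap.ker_eq_bot, eq_bot_iff]
    intro x hx
    rw [LinearMap.mem_ker] at hx
    have : x = 0 := hΩnd.1 x (fun y => by rw [hx]; rfl)
    simp [this]
  have hΩsurj : Function.Surjective (Ω : V →ₗ[ℝ] Module.Dual ℝ V) := by
    rw [← LinearMap.injective_iff_surjective_of_finrank_eq_finrank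
      (Subspace.dual_finrank_eq (V := V)).symm]
    exact hΩinj
  have hΦsurj : Function.Surjective Φ :=
    (LinearMap.dualMap_surjective_of_injective K.injective_subtype).comp hΩsurj
  have hΦmem : ∀ x : V, x ∈ LinearMap.ker Φ ↔ ∀ y ∈ K, Ω x y = 0 := by
    intro x
    rw [LinearMap.mem_ker]
    constructor
    · intro h y hy
      have := LinearMap.congr_fun h ⟨y, hy⟩
      simpa [hΦ] using this
    · intro h
      ext ⟨y, hy⟩
      simpa [hΦ] using h y hy
  have hKpdim : finrank ℝ (LinearMap.ker Φ) + finrank ℝ K = 2 * g := by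
    have h1 := LinearMap.finrank_range_add_finrank_ker Φ
    rw [LinearMap.range_eq_top.2 hΦsurj, finrank_top, Subspace.dual_finrank_eq, hV] at h1
    omega
  set R : Submodule ℝ V := K ⊓ LinearMap.ker Φ with hR
  have hRdim : finrank ℝ R ≤ finrank ℝ (LinearMap.ker Φ) :=
    Submodule.finrank_mono inf_le_right
  set R₀ : Submodule ℝ K := R.comap K.subtype with hR₀
  obtain ⟨C, hC⟩ := Submodule.exists_isCompl R₀
  set S : Submodule ℝ V := C.map K.subtype with hS
  have hSK : S ≤ K := Submodule.map_subtype_le K C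
  have hCR : finrank ℝ R₀ + finrank ℝ C = finrank ℝ K :=
    Submodule.finrank_add_eq_of_isCompl hC
  have hSC : finrank ℝ S = finrank ℝ C := Submodule.finrank_map_subtype_eq K C
  have hRK : R ≤ K := inf_le_left
  have hR₀R : finrank ℝ R₀ = finrank ℝ R := by
    have hmap : R₀.map K.subtype = R := by
      rw [hR₀, Submodule.map_comap_subtype, inf_eq_right.2 hRK]
    rw [← hmap, Submodule.finrank_map_subtype_eq]
  have hSnd : ∀ x ∈ S, (∀ y ∈ S, Ω x y = 0) → x = 0 := by
    intro x hxS h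
    have hxK : x ∈ K := hSK hxS
    have hxKp : x ∈ LinearMap.ker Φ := by
      rw [hΦmem]
      intro y hyK
      have hmem : (⟨y, hyK⟩ : K) ∈ (⊤ : Submodule ℝ K) := trivial
      rw [← hC.sup_eq_top, Submodule.mem_sup] at hmem
      obtain ⟨r, hr, c, hc, hrc⟩ := hmem
      have hy : y = (r : V) + (c : V) := by
        have := congrArg (Subtype.val) hrc
        simpa using this.symm
      have hrR : (r : V) ∈ R := hr
      have h1 : Ω x (r : V) = 0 := by
        have hrKp : (r : V) ∈ LinearMap.ker Φ := hrR.2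
        have := (hΦmem (r : V)).1 hrKp x hxK
        rw [← hΩalt.neg, this, neg_zero]
      have h2 : Ω x (c : V) = 0 := h _ (Submodule.mem_map_of_mem hc)
      rw [hy, map_add, h1, h2, add_zero]
    have hxR : x ∈ R := ⟨hxK, hxKp⟩
    obtain ⟨c, hc, hcx⟩ := hxS
    have hcR₀ : c ∈ R₀ := by
      rw [hR₀, Submodule.mem_comap]
      show K.subtype c ∈ R
      rw [hcx]
      exact hxR
    have hc0 : c ∈ (⊥ : Submodule ℝ K) := by
      rw [← hC.inf_eq_bot]
      exact ⟨hcR₀, hc⟩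
    rw [Submodule.mem_bot] at hc0
    rw [← hcx, hc0, map_zero]
  have hSdim : 2 * n ≤ finrank ℝ S := by
    have e1 : 2 * n * q = 2 * (n * q) := by ring
    have e2 : n ≤ n * q := Nat.le_mul_of_pos_right n hq
    omega
  obtain ⟨P, hPS, hPrank, hPnd⟩ := aux_symp V Ω hΩalt n S hSnd hSdim
  exact ⟨P, hPrank, hPnd, fun f hf => hKE f (le_trans hf (le_trans hPS hSK))⟩

end Main
end

section
/- Let V be a finite-dimensional real topological vector space (e.g. ℝᵈ with its standard topology) and let S and T be finite subsets of V. Then 0 belongs to the topological interior of the set convexHull(S) + span(T) (the Minkowski sum of the convex hull of S and the linear span of T) if and only if there exist nonnegative real numbers (a_s)_{s∈S} with Σ_{s∈S} a_s = 1 and real numbers (b_t)_{t∈T} such that Σ_{s∈S} a_s·s + Σ_{t∈T} b_t·t = 0 and the set {s ∈ S : a_s ≠ 0} ∪ T spans V as a real vector space. -/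
open scoped Pointwise

open Set Filter Topology

/-- In a finite-dimensional normed space, a convex set containing a positive multiple of
every vector has `0` in its interior. -/
private lemma auxA {W : Type*} [NormedAddCommGroup W] [NormedSpace ℝ W] [FiniteDimensional ℝ W]
    {s : Set W} (hs : Convex ℝ s) (h : ∀ v : W, ∃ ε : ℝ, 0 < ε ∧ ε • v ∈ s) :
    (0 : W) ∈ interior s := by
  have h0 : (0 : W) ∈ s := by
    obtain ⟨ε, hε, hm⟩ := h 0
    simpa using hm
  have hspan : affineSpan ℝ s = ⊤ := by
    refine top_unique fun v _ => ?_
    obtain ⟨ε, hε, hm⟩ := h v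
    have := AffineSubspace.smul_vsub_vadd_mem (affineSpan ℝ s) ε⁻¹
      (mem_affineSpan ℝ hm) (mem_affineSpan ℝ h0) (mem_affineSpan ℝ h0)
    simpa [inv_smul_smul₀ hε.ne'] using this
  obtain ⟨x, hx⟩ := (hs.interior_nonempty_iff_affineSpan_eq_top).2 hspan
  obtain ⟨ε, hε, hm⟩ := h (-x)
  have h1 : (0 : ℝ) < 1 + ε := by linarith
  have key := hs.combo_interior_self_mem_interior hx hm
    (a := ε / (1 + ε)) (b := 1 / (1 + ε)) (by positivity) (by positivity)
    (by rw [← add_div, add_comm, div_self h1.ne'])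
  have heq : (ε / (1 + ε)) • x + (1 / (1 + ε)) • (ε • (-x)) = 0 := by
    rw [smul_smul, smul_neg]
    rw [show 1 / (1 + ε) * ε = ε / (1 + ε) by ring]
    exact add_neg_cancel _
  rwa [heq] at key

/-- Transfer of `auxA` to a general finite-dimensional Hausdorff real TVS. -/
private lemma auxB (V : Type*) [AddCommGroup V] [Module ℝ V] [FiniteDimensional ℝ V]
    [TopologicalSpace V] [IsTopologicalAddGroup V] [ContinuousSMul ℝ V] [T2Space V]
    {s : Set V} (hs : Convex ℝ s) (h : ∀ v : V, ∃ ε : ℝ, 0 < ε ∧ ε • v ∈ s) :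
    (0 : V) ∈ interior s := by
  let e : V ≃L[ℝ] (Fin (Module.finrank ℝ V) → ℝ) :=
    (Module.finBasis ℝ V).equivFun.toContinuousLinearEquiv
  have hconv : Convex ℝ (⇑e '' s) := by
    simpa using hs.linear_image (e.toLinearEquiv : V →ₗ[ℝ] (Fin (Module.finrank ℝ V) → ℝ))
  have himg : (0 : Fin (Module.finrank ℝ V) → ℝ) ∈ interior (⇑e '' s) := by
    apply auxA hconv
    intro v
    obtain ⟨ε, hε, hm⟩ := h (e.symm v)
    exact ⟨ε, hε, ⟨ε • e.symm v, hm, by simp⟩⟩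
  rw [← ContinuousLinearEquiv.coe_toHomeomorph, ← Homeomorph.image_interior] at himg
  obtain ⟨x, hx, hex⟩ := himg
  have : x = 0 := by
    apply e.injective
    simpa using hex
  rwa [this] at hx

/-- `0` lies in the interior of `convexHull S + span T` iff there is a convex
combination of points of `S` and a linear combination of points of `T` summing to `0`, such
that the points of `S` with nonzero coefficient together with `T` span the whole space. -/
theorem stmt14 (V : Type*) [AddCommGroup V] [Module ℝ V] [FiniteDimensional ℝ V]
    [TopologicalSpace V] [IsTopologicalAddGroup V] [ContinuousSMul ℝ V] [T2Space V]
    (S T : Finset V) :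
    0 ∈ interior (convexHull ℝ (S : Set V) + (Submodule.span ℝ (T : Set V) : Set V)) ↔
      ∃ a b : V → ℝ,
        (∀ s ∈ S, 0 ≤ a s) ∧
        (∑ s ∈ S, a s) = 1 ∧
        ((∑ s ∈ S, a s • s) + ∑ t ∈ T, b t • t) = 0 ∧
        Submodule.span ℝ ({s : V | s ∈ S ∧ a s ≠ 0} ∪ (T : Set V)) = ⊤ := by
  classical
  set K : Set V := convexHull ℝ (S : Set V) + (Submodule.span ℝ (T : Set V) : Set V) with hKdef
  constructor
  · intro h0
    obtain ⟨y, hy, z, hz, hyz⟩ := Set.mem_add.1 (interior_subset h0)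
    have hS : S.Nonempty := by
      by_contra hc
      rw [Finset.not_nonempty_iff_eq_empty] at hc
      simp [hc] at hy
    have hcard : (0 : ℝ) < S.card := by exact_mod_cast Finset.card_pos.2 hS
    -- span of S ∪ T is everything
    have hsub : K ⊆ (Submodule.span ℝ ((S : Set V) ∪ (T : Set V)) : Set V) := by
      rintro x ⟨u, hu, w, hw, rfl⟩
      refine Submodule.add_mem _ ?_ (Submodule.span_mono Set.subset_union_right hw)
      exact convexHull_min (Set.subset_union_left.trans Submodule.subset_span)
        (Submodule.span ℝ _).convex hu
    have htop : Submodule.span ℝ ((S : Set V) ∪ (T : Set V)) = ⊤ :=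
      Submodule.eq_top_of_nonempty_interior' _ ⟨0, interior_mono hsub h0⟩
    -- find a small multiple of minus the centroid inside K
    set c : V := (S.card : ℝ)⁻¹ • ∑ s ∈ S, s with hc
    have hT : Tendsto (fun t : ℝ => t • (-c)) (𝓝 0) (𝓝 0) := by
      have := (continuous_id.smul (continuous_const (y := -c))).tendsto (0 : ℝ)
      simpa using (show Tendsto (fun t : ℝ => t • (-c)) (𝓝 0) (𝓝 ((0:ℝ) • -c)) from this)
    have hmem : interior K ∈ 𝓝 (0 : V) := isOpen_interior.mem_nhds h0
    have hev2 : ∀ᶠ t : ℝ in 𝓝[>] (0 : ℝ), t • (-c) ∈ interior K :=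
      (hT.eventually hmem).filter_mono nhdsWithin_le_nhds
    have hevpos : ∀ᶠ t : ℝ in 𝓝[>] (0 : ℝ), 0 < t :=
      eventually_mem_nhdsWithin.mono fun x hx => hx
    obtain ⟨ε, hεK, hεpos⟩ := (hev2.and hevpos).exists
    obtain ⟨x', hx', w', hw', hxw⟩ := Set.mem_add.1 (interior_subset hεK)
    rw [Finset.convexHull_eq] at hx'
    obtain ⟨a', ha'0, ha'1, ha'c⟩ := hx'
    have hx'sum : ∑ s ∈ S, a' s • s = x' := by
      rw [← ha'c, Finset.centerMass_eq_of_sum_1 _ _ ha'1]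
      simp
    have hε1 : (0 : ℝ) < 1 + ε := by linarith
    set a : V → ℝ := fun s => (ε / S.card + a' s) / (1 + ε) with ha
    have hapos : ∀ s ∈ S, 0 < a s := fun s hs =>
      div_pos (add_pos_of_pos_of_nonneg (div_pos hεpos hcard) (ha'0 s hs)) hε1
    have hasum : ∑ s ∈ S, a s = 1 := by
      simp only [ha]
      rw [← Finset.sum_div, Finset.sum_add_distrib, ha'1, Finset.sum_const, nsmul_eq_mul]
      field_simp
      ring
    have haval : ∑ s ∈ S, a s • s = (1 + ε)⁻¹ • (-w') := by
      have h2 : ε • c + x' = -w' := by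
        have h3 := hxw
        rw [smul_neg] at h3
        linear_combination (norm := module) h3
      have hpt : ∀ s : V, a s • s = ((1 + ε)⁻¹ * (ε / S.card)) • s + (1 + ε)⁻¹ • (a' s • s) := by
        intro s
        simp only [ha, smul_smul, ← add_smul]
        congr 1
        field_simp
      calc ∑ s ∈ S, a s • s
          = ((1 + ε)⁻¹ * (ε / S.card)) • (∑ s ∈ S, s) + (1 + ε)⁻¹ • x' := by
            rw [← hx'sum]
            simp only [hpt, Finset.sum_add_distrib, Finset.smul_sum]
        _ = (1 + ε)⁻¹ • (ε • c + x') := by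
            rw [hc]
            rw [div_eq_mul_inv]
            module
        _ = (1 + ε)⁻¹ • (-w') := by rw [h2]
    have hspan2 : (1 + ε)⁻¹ • w' ∈ Submodule.span ℝ (T : Set V) := Submodule.smul_mem _ _ hw'
    obtain ⟨f, -, hf⟩ := Submodule.mem_span_finset.1 hspan2
    refine ⟨a, f, fun s hs => (hapos s hs).le, hasum, ?_, ?_⟩
    · rw [haval, hf]
      simp [smul_neg]
    · have hset : {s : V | s ∈ S ∧ a s ≠ 0} = (S : Set V) :=
        Set.ext fun s => ⟨fun h => h.1, fun h => ⟨h, (hapos s h).ne'⟩⟩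
      rw [hset]; exact htop
  · rintro ⟨a, b, ha0, ha1, hab, hspan⟩
    have hKconv : Convex ℝ K :=
      (convex_convexHull ℝ _).add (Submodule.span ℝ (T : Set V)).convex
    apply auxB V hKconv
    intro v
    set S' : Finset V := S.filter (fun s => a s ≠ 0) with hS'
    have hS'sub : S' ⊆ S := Finset.filter_subset _ _
    have hsetS' : {s : V | s ∈ S ∧ a s ≠ 0} = (S' : Set V) := by
      ext s; simp [hS']
    have hv : v ∈ Submodule.span ℝ (S' : Set V) ⊔ Submodule.span ℝ (T : Set V) := by
      rw [← Submodule.span_union, ← hsetS', hspan]; trivial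
    obtain ⟨u, hu, w, hw, rfl⟩ := Submodule.mem_sup.1 hv
    obtain ⟨cc, -, hcc⟩ := Submodule.mem_span_finset.1 hu
    set C : ℝ := ∑ s ∈ S', cc s with hC
    set d : V → ℝ := fun s => (if s ∈ S' then cc s else 0) - C * a s with hd
    have hsplit : ∑ s ∈ S, (if s ∈ S' then cc s else 0) = C := by
      rw [Finset.sum_ite_mem, Finset.inter_eq_right.mpr hS'sub]
    have hdsum : ∑ s ∈ S, d s = 0 := by
      simp only [hd, Finset.sum_sub_distrib, hsplit, ← Finset.mul_sum, ha1, mul_one, sub_self]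
    have hsplit2 : ∑ s ∈ S, (if s ∈ S' then cc s else 0) • s = u := by
      rw [← hcc]
      simp only [ite_smul, zero_smul]
      rw [Finset.sum_ite_mem, Finset.inter_eq_right.mpr hS'sub]
    have hdval : ∑ s ∈ S, d s • s = u - C • (∑ s ∈ S, a s • s) := by
      simp only [hd, sub_smul, Finset.sum_sub_distrib, hsplit2, mul_smul, ← Finset.smul_sum]
    -- choose ε small enough
    have hev : ∀ᶠ ε : ℝ in 𝓝[>] 0, ∀ s ∈ S, 0 ≤ a s + ε * d s := by
      rw [eventually_all_finset]
      intro s hs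
      rcases eq_or_ne (a s) 0 with hz | hz
      · have hd0 : d s = 0 := by
          have : s ∉ S' := by simp [hS', Finset.mem_filter, hz]
          simp [hd, this, hz]
        filter_upwards with ε
        simp [hz, hd0]
      · have hpos : 0 < a s := lt_of_le_of_ne (ha0 s hs) (Ne.symm hz)
        have ht : Tendsto (fun ε : ℝ => a s + ε * d s) (𝓝[>] 0) (𝓝 (a s)) := by
          have hcont : Continuous (fun ε : ℝ => a s + ε * d s) := by fun_prop
          have := hcont.tendsto 0
          simpa using this.mono_left nhdsWithin_le_nhds
        exact ht.eventually (eventually_ge_nhds hpos)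
    have hevpos : ∀ᶠ t : ℝ in 𝓝[>] (0 : ℝ), 0 < t :=
      eventually_mem_nhdsWithin.mono fun x hx => hx
    obtain ⟨ε, hεnn, hεpos⟩ := (hev.and hevpos).exists
    refine ⟨ε, hεpos, ?_⟩
    set z : V := ∑ s ∈ S, a s • s with hzdef
    have hzmem : z ∈ Submodule.span ℝ (T : Set V) := by
      have hz' : z = -∑ t ∈ T, b t • t := eq_neg_of_add_eq_zero_left hab
      rw [hz']
      exact neg_mem (Submodule.sum_mem _ fun t ht =>
        Submodule.smul_mem _ _ (Submodule.subset_span ht))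
    have hwsum : ∑ s ∈ S, (a s + ε * d s) • s = z + ε • (u - C • z) := by
      simp only [add_smul, Finset.sum_add_distrib, hzdef, mul_smul, ← Finset.smul_sum, hdval]
    have hsum1 : ∑ s ∈ S, (a s + ε * d s) • (1 : ℝ) = 1 := by
      simp only [smul_eq_mul, mul_one, Finset.sum_add_distrib, ha1, ← Finset.mul_sum, hdsum,
        mul_zero, add_zero]
    have hmemhull : ∑ s ∈ S, (a s + ε * d s) • s ∈ convexHull ℝ (S : Set V) := by
      have hws : ∑ s ∈ S, (a s + ε * d s) = 1 := by
        simpa using hsum1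
      have := S.centerMass_id_mem_convexHull (w := fun s => a s + ε * d s) hεnn (by rw [hws]; norm_num)
      rwa [Finset.centerMass_eq_of_sum_1 _ _ hws] at this
    refine Set.mem_add.2 ⟨∑ s ∈ S, (a s + ε * d s) • s, hmemhull,
      ε • w - z + (ε * C) • z, ?_, ?_⟩
    · exact Submodule.add_mem _
        (Submodule.sub_mem _ (Submodule.smul_mem _ ε hw) hzmem) (Submodule.smul_mem _ _ hzmem)
    · rw [hwsum]; module
end

section
/- Fix 𝔽 ∈ {ℝ, ℂ, ℍ} and an integer m ≥ 3. Let η₃ = diag(1, 1, −1) ∈ M₃(ℝ) and let η = diag(η₃, I_{m−2}) ∈ M_{m+1}(𝔽) (a diagonal form of signature (m, 1)). Let SO(2,1) = {h ∈ M₃(ℝ) : hᵀη₃h = η₃ and det(h) = 1}, and for h ∈ SO(2,1) let ι(h) ∈ M_{m+1}(𝔽) be the block-diagonal matrix diag(h, I_{m−2}) (real entries viewed in 𝔽). Then {X ∈ M_{m+1}(𝔽) : X*ηX = η and X·ι(h) = ι(h)·X for all h ∈ SO(2,1)} is equal to {block-diagonal diag(c·I₃, k) : c ∈ 𝔽 with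 c̄c = 1, and k ∈ M_{m−2}(𝔽) with k*k = I_{m−2}}. -/
open Matrix

section Aux
variable {𝔽 : Type*} [Ring 𝔽] [Algebra ℝ 𝔽]

private lemma auxCancelLeft {r : ℝ} (hr : r ≠ 0) {x : 𝔽} (h : algebraMap ℝ 𝔽 r * x = 0) :
    x = 0 := by
  have h2 := congrArg (fun y => algebraMap ℝ 𝔽 r⁻¹ * y) h
  simpa [← mul_assoc, ← RingHom.map_mul, inv_mul_cancel₀ hr] using h2

private lemma auxNegSelf {x : 𝔽} (h : x = -x) : x = 0 := by
  have h2 : algebraMap ℝ 𝔽 2 * x = 0 := by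
    rw [map_ofNat, two_mul]; nth_rewrite 1 [h]; exact neg_add_cancel x
  exact auxCancelLeft two_ne_zero h2

private lemma auxCancelRight {r : ℝ} (hr : r ≠ 0) {x y : 𝔽}
    (h : x * algebraMap ℝ 𝔽 r = y * algebraMap ℝ 𝔽 r) : x = y := by
  have h2 := congrArg (fun y => y * algebraMap ℝ 𝔽 r⁻¹) h
  simpa [mul_assoc, ← RingHom.map_mul, mul_inv_cancel₀ hr] using h2

private lemma centralA (A : Matrix (Fin 3) (Fin 3) 𝔽)
    (h1 : A * (!![1,0,0;0,-1,0;0,0,-1] : Matrix (Fin 3) (Fin 3) ℝ).map (algebraMap ℝ 𝔽)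
        = (!![1,0,0;0,-1,0;0,0,-1] : Matrix (Fin 3) (Fin 3) ℝ).map (algebraMap ℝ 𝔽) * A)
    (h2 : A * (!![-1,0,0;0,1,0;0,0,-1] : Matrix (Fin 3) (Fin 3) ℝ).map (algebraMap ℝ 𝔽)
        = (!![-1,0,0;0,1,0;0,0,-1] : Matrix (Fin 3) (Fin 3) ℝ).map (algebraMap ℝ 𝔽) * A)
    (hr : A * (!![0,-1,0;1,0,0;0,0,1] : Matrix (Fin 3) (Fin 3) ℝ).map (algebraMap ℝ 𝔽)
        = (!![0,-1,0;1,0,0;0,0,1] : Matrix (Fin 3) (Fin 3) ℝ).map (algebraMap ℝ 𝔽) * A)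
    (hL : A * (!![1,0,0;0,(5:ℝ)/3,4/3;0,4/3,5/3] : Matrix (Fin 3) (Fin 3) ℝ).map (algebraMap ℝ 𝔽)
        = (!![1,0,0;0,(5:ℝ)/3,4/3;0,4/3,5/3] : Matrix (Fin 3) (Fin 3) ℝ).map (algebraMap ℝ 𝔽) * A) :
    A = A 0 0 • 1 := by
  have e01 := congrFun (congrFun h1 0) 1
  have e02 := congrFun (congrFun h1 0) 2
  have e10 := congrFun (congrFun h1 1) 0
  have e20 := congrFun (congrFun h1 2) 0
  have e12 := congrFun (congrFun h2 1) 2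
  have e21 := congrFun (congrFun h2 2) 1
  have er01 := congrFun (congrFun hr 0) 1
  have eL12 := congrFun (congrFun hL 1) 2
  simp [Matrix.mul_apply, Fin.sum_univ_three, Matrix.map_apply, Matrix.vecHead,
    Matrix.vecTail] at e01 e02 e10 e20 e12 e21 er01 eL12
  have z01 : A 0 1 = 0 := auxNegSelf e01.symm
  have z02 : A 0 2 = 0 := auxNegSelf e02.symm
  have z10 : A 1 0 = 0 := auxNegSelf e10
  have z20 : A 2 0 = 0 := auxNegSelf e20
  have z12 : A 1 2 = 0 := auxNegSelf e12.symm
  have z21 : A 2 1 = 0 := auxNegSelf e21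
  have d22 : A 1 1 = A 2 2 := by
    rw [z12] at eL12
    simp only [zero_mul, mul_zero, add_zero, zero_add] at eL12
    refine auxCancelRight (show (4:ℝ)/3 ≠ 0 by norm_num) ?_
    rw [eL12]; exact Algebra.commutes _ _
  ext i j
  fin_cases i <;> fin_cases j <;>
    simp_all [Matrix.smul_apply, Matrix.one_apply, smul_eq_mul]

private lemma zeroB {n : ℕ} (B : Matrix (Fin 3) (Fin n) 𝔽)
    (h1 : B = (!![1,0,0;0,-1,0;0,0,-1] : Matrix (Fin 3) (Fin 3) ℝ).map (algebraMap ℝ 𝔽) * B)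
    (h2 : B = (!![-1,0,0;0,1,0;0,0,-1] : Matrix (Fin 3) (Fin 3) ℝ).map (algebraMap ℝ 𝔽) * B) :
    B = 0 := by
  ext i j
  fin_cases i
  · have e := congrFun (congrFun h2 0) j
    simp [Matrix.mul_apply, Fin.sum_univ_three, Matrix.map_apply, Matrix.vecHead,
      Matrix.vecTail] at e
    simpa using auxNegSelf e
  · have e := congrFun (congrFun h1 1) j
    simp [Matrix.mul_apply, Fin.sum_univ_three, Matrix.map_apply, Matrix.vecHead,
      Matrix.vecTail] at e
    simpa using auxNegSelf e
  · have e := congrFun (congrFun h1 2) j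
    simp [Matrix.mul_apply, Fin.sum_univ_three, Matrix.map_apply, Matrix.vecHead,
      Matrix.vecTail] at e
    simpa using auxNegSelf e

private lemma zeroC {n : ℕ} (C : Matrix (Fin n) (Fin 3) 𝔽)
    (h1 : C * (!![1,0,0;0,-1,0;0,0,-1] : Matrix (Fin 3) (Fin 3) ℝ).map (algebraMap ℝ 𝔽) = C)
    (h2 : C * (!![-1,0,0;0,1,0;0,0,-1] : Matrix (Fin 3) (Fin 3) ℝ).map (algebraMap ℝ 𝔽) = C) :
    C = 0 := by
  ext i j
  fin_cases j
  · have e := congrFun (congrFun h2 i) 0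
    simp [Matrix.mul_apply, Fin.sum_univ_three, Matrix.map_apply, Matrix.vecHead,
      Matrix.vecTail] at e
    simpa using auxNegSelf e.symm
  · have e := congrFun (congrFun h1 i) 1
    simp [Matrix.mul_apply, Fin.sum_univ_three, Matrix.map_apply, Matrix.vecHead,
      Matrix.vecTail] at e
    simpa using auxNegSelf e.symm
  · have e := congrFun (congrFun h1 i) 2
    simp [Matrix.mul_apply, Fin.sum_univ_three, Matrix.map_apply, Matrix.vecHead,
      Matrix.vecTail] at e
    simpa using auxNegSelf e.symm

private lemma scalarComm (c : 𝔽) (h : Matrix (Fin 3) (Fin 3) ℝ) :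
    (c • (1 : Matrix (Fin 3) (Fin 3) 𝔽)) * h.map (algebraMap ℝ 𝔽)
      = h.map (algebraMap ℝ 𝔽) * (c • (1 : Matrix (Fin 3) (Fin 3) 𝔽)) := by
  ext i j
  simp [Matrix.mul_apply, Matrix.map_apply, Matrix.smul_apply, Matrix.one_apply,
    smul_eq_mul, mul_ite, ite_mul, Algebra.commutes]

end Aux

section Aux2
variable {𝔽 : Type*} [Ring 𝔽] [StarRing 𝔽] [Algebra ℝ 𝔽]

private lemma conj_eta_diag {c : 𝔽} :
    (c • (1 : Matrix (Fin 3) (Fin 3) 𝔽))ᴴ * Matrix.diagonal ![1,1,-1]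
      * (c • (1 : Matrix (Fin 3) (Fin 3) 𝔽))
      = Matrix.diagonal ![star c * 1 * c, star c * 1 * c, star c * (-1) * c] := by
  rw [Matrix.smul_one_eq_diagonal, Matrix.diagonal_conjTranspose,
    Matrix.diagonal_mul_diagonal, Matrix.diagonal_mul_diagonal,
    Matrix.diagonal_eq_diagonal_iff]
  intro i
  fin_cases i <;> simp [Matrix.vecHead, Matrix.vecTail, Pi.star_def, mul_assoc]

private lemma conj_eta {c : 𝔽} (hc : star c * c = 1) :
    (c • (1 : Matrix (Fin 3) (Fin 3) 𝔽))ᴴ * Matrix.diagonal ![1,1,-1]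
      * (c • (1 : Matrix (Fin 3) (Fin 3) 𝔽)) = Matrix.diagonal ![1,1,-1] := by
  rw [conj_eta_diag, Matrix.diagonal_eq_diagonal_iff]
  intro i
  fin_cases i <;> simp [Matrix.vecHead, Matrix.vecTail, mul_neg, neg_mul, hc]

private lemma eta_extract {c : 𝔽}
    (h : (c • (1 : Matrix (Fin 3) (Fin 3) 𝔽))ᴴ * Matrix.diagonal ![1,1,-1]
      * (c • (1 : Matrix (Fin 3) (Fin 3) 𝔽)) = Matrix.diagonal ![1,1,-1]) :
    star c * c = 1 := by
  rw [conj_eta_diag, Matrix.diagonal_eq_diagonal_iff] at h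
  have e := h 0
  simpa using e

end Aux2

private lemma diag3R : Matrix.diagonal ![(1:ℝ),1,-1] = !![1,0,0;0,1,0;0,0,-1] := by
  ext i j; fin_cases i <;> fin_cases j <;>
    simp [Matrix.diagonal, Matrix.vecHead, Matrix.vecTail]

/-- the centralizer of the standard copy of `SO(2,1)` in `O(m,1,𝔽)` is
`O(1,𝔽) × O(m−2,𝔽)`, for `𝔽 ∈ {ℝ, ℂ, ℍ}` and `m ≥ 3`. -/
theorem stmt16 (𝔽 : Type*) [Ring 𝔽] [StarRing 𝔽] [Algebra ℝ 𝔽] [StarModule ℝ 𝔽]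
    (h𝔽 : Nonempty (𝔽 ≃⋆ₐ[ℝ] ℝ) ∨ Nonempty (𝔽 ≃⋆ₐ[ℝ] ℂ) ∨
      Nonempty (𝔽 ≃⋆ₐ[ℝ] Quaternion ℝ))
    (m : ℕ) (hm : 3 ≤ m)
    (η₃ℝ : Matrix (Fin 3) (Fin 3) ℝ) (hη₃ℝ : η₃ℝ = Matrix.diagonal ![1, 1, -1])
    (η₃ : Matrix (Fin 3) (Fin 3) 𝔽) (hη₃ : η₃ = Matrix.diagonal ![1, 1, -1])
    (η : Matrix (Fin 3 ⊕ Fin (m - 2)) (Fin 3 ⊕ Fin (m - 2)) 𝔽)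
    (hη : η = fromBlocks η₃ 0 0 1)
    (SO21 : Set (Matrix (Fin 3) (Fin 3) ℝ))
    (hSO21 : SO21 = {h | hᵀ * η₃ℝ * h = η₃ℝ ∧ h.det = 1})
    (ι : Matrix (Fin 3) (Fin 3) ℝ →
      Matrix (Fin 3 ⊕ Fin (m - 2)) (Fin 3 ⊕ Fin (m - 2)) 𝔽)
    (hι : ∀ h, ι h = fromBlocks (h.map (algebraMap ℝ 𝔽)) 0 0 1) :
    {X : Matrix (Fin 3 ⊕ Fin (m - 2)) (Fin 3 ⊕ Fin (m - 2)) 𝔽 |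
        Xᴴ * η * X = η ∧ ∀ h ∈ SO21, X * ι h = ι h * X} =
      {X : Matrix (Fin 3 ⊕ Fin (m - 2)) (Fin 3 ⊕ Fin (m - 2)) 𝔽 |
        ∃ (c : 𝔽) (k : Matrix (Fin (m - 2)) (Fin (m - 2)) 𝔽),
          star c * c = 1 ∧ kᴴ * k = 1 ∧
          X = fromBlocks (c • (1 : Matrix (Fin 3) (Fin 3) 𝔽)) 0 0 k} := by
  subst hη₃ℝ hη₃ hη hSO21
  -- membership of the four generators
  have m1 : (!![1,0,0;0,-1,0;0,0,-1] : Matrix (Fin 3) (Fin 3) ℝ) ∈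
      {h : Matrix (Fin 3) (Fin 3) ℝ |
        hᵀ * Matrix.diagonal ![1,1,-1] * h = Matrix.diagonal ![1,1,-1] ∧ h.det = 1} := by
    constructor
    · rw [diag3R, show (!![1,0,0;0,-1,0;0,0,-1] : Matrix (Fin 3) (Fin 3) ℝ)ᵀ
          = !![1,0,0;0,-1,0;0,0,-1] from by
        ext i j; fin_cases i <;> fin_cases j <;> simp [Matrix.vecHead, Matrix.vecTail]]
      norm_num [Matrix.mul_fin_three]
    · simp [Matrix.det_fin_three] <;> norm_num
  have m2 : (!![-1,0,0;0,1,0;0,0,-1] : Matrix (Fin 3) (Fin 3) ℝ) ∈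
      {h : Matrix (Fin 3) (Fin 3) ℝ |
        hᵀ * Matrix.diagonal ![1,1,-1] * h = Matrix.diagonal ![1,1,-1] ∧ h.det = 1} := by
    constructor
    · rw [diag3R, show (!![-1,0,0;0,1,0;0,0,-1] : Matrix (Fin 3) (Fin 3) ℝ)ᵀ
          = !![-1,0,0;0,1,0;0,0,-1] from by
        ext i j; fin_cases i <;> fin_cases j <;> simp [Matrix.vecHead, Matrix.vecTail]]
      norm_num [Matrix.mul_fin_three]
    · simp [Matrix.det_fin_three] <;> norm_num
  have mr : (!![0,-1,0;1,0,0;0,0,1] : Matrix (Fin 3) (Fin 3) ℝ) ∈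
      {h : Matrix (Fin 3) (Fin 3) ℝ |
        hᵀ * Matrix.diagonal ![1,1,-1] * h = Matrix.diagonal ![1,1,-1] ∧ h.det = 1} := by
    constructor
    · rw [diag3R, show (!![0,-1,0;1,0,0;0,0,1] : Matrix (Fin 3) (Fin 3) ℝ)ᵀ
          = !![0,1,0;-1,0,0;0,0,1] from by
        ext i j; fin_cases i <;> fin_cases j <;> simp [Matrix.vecHead, Matrix.vecTail]]
      norm_num [Matrix.mul_fin_three]
    · simp [Matrix.det_fin_three] <;> norm_num
  have mL : (!![1,0,0;0,(5:ℝ)/3,4/3;0,4/3,5/3] : Matrix (Fin 3) (Fin 3) ℝ) ∈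
      {h : Matrix (Fin 3) (Fin 3) ℝ |
        hᵀ * Matrix.diagonal ![1,1,-1] * h = Matrix.diagonal ![1,1,-1] ∧ h.det = 1} := by
    constructor
    · rw [diag3R, show (!![1,0,0;0,(5:ℝ)/3,4/3;0,4/3,5/3] : Matrix (Fin 3) (Fin 3) ℝ)ᵀ
          = !![1,0,0;0,(5:ℝ)/3,4/3;0,4/3,5/3] from by
        ext i j; fin_cases i <;> fin_cases j <;> simp [Matrix.vecHead, Matrix.vecTail]]
      norm_num [Matrix.mul_fin_three]
    · simp [Matrix.det_fin_three] <;> norm_num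
  ext X
  simp only [Set.mem_setOf_eq]
  constructor
  · rintro ⟨hQ, hcomm⟩
    obtain ⟨A, B, C, D, rfl⟩ : ∃ A B C D, X = fromBlocks A B C D :=
      ⟨_, _, _, _, (fromBlocks_toBlocks X).symm⟩
    have c1 := hcomm _ m1
    have c2 := hcomm _ m2
    have cr := hcomm _ mr
    have cL := hcomm _ mL
    rw [hι] at c1 c2 cr cL
    simp only [fromBlocks_multiply, Matrix.mul_zero, Matrix.zero_mul, Matrix.mul_one,
      Matrix.one_mul, add_zero, zero_add, fromBlocks_inj] at c1 c2 cr cL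
    obtain ⟨hA1, hB1, hC1, -⟩ := c1
    obtain ⟨hA2, hB2, hC2, -⟩ := c2
    obtain ⟨hAr, -, -, -⟩ := cr
    obtain ⟨hAL, -, -, -⟩ := cL
    have hA : A = A 0 0 • 1 := centralA A hA1 hA2 hAr hAL
    have hB : B = 0 := zeroB B hB1 hB2
    have hC : C = 0 := zeroC C hC1 hC2
    rw [hA, hB, hC] at hQ ⊢
    refine ⟨A 0 0, D, ?_, ?_, rfl⟩
    · simp only [fromBlocks_conjTranspose, fromBlocks_multiply, Matrix.mul_zero,
        Matrix.zero_mul, Matrix.mul_one, Matrix.one_mul, add_zero, zero_add,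
        Matrix.conjTranspose_zero, fromBlocks_inj] at hQ
      exact eta_extract hQ.1
    · simp only [fromBlocks_conjTranspose, fromBlocks_multiply, Matrix.mul_zero,
        Matrix.zero_mul, Matrix.mul_one, Matrix.one_mul, add_zero, zero_add,
        Matrix.conjTranspose_zero, fromBlocks_inj] at hQ
      exact hQ.2.2.2
  · rintro ⟨c, k, hc, hk, rfl⟩
    constructor
    · simp only [fromBlocks_conjTranspose, fromBlocks_multiply, Matrix.mul_zero,
        Matrix.zero_mul, Matrix.mul_one, Matrix.one_mul, add_zero, zero_add,
        Matrix.conjTranspose_zero, Matrix.conjTranspose_one]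
      rw [conj_eta hc, hk]
    · intro h hh
      rw [hι]
      simp only [fromBlocks_multiply, Matrix.mul_zero, Matrix.zero_mul, Matrix.mul_one,
        Matrix.one_mul, add_zero, zero_add, scalarComm]
end
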